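/- Under the connectivity assumption, any sequence {x^k} generated by the algorithm is bounded in (ℝ^d)^n. -/

import Mathlib

open Finset Filter

noncomputable def obj {d n : ℕ} {J : Type*} (a : J → EuclideanSpace ℝ (Fin d))
    (A : Fin n → Finset J) (dhat : Fin n → J → ℝ)
    (B : Fin n → Finset (Fin n)) (lhat : Fin n → Fin n → ℝ)
    (x : Fin n → EuclideanSpace ℝ (Fin d)) : ℝ :=
  (∑ i, ∑ j ∈ A i, max (‖x i - a j‖ - dhat i j) 0 ^ 2)
    + (1 / 2) * ∑ i, ∑ q ∈ B i, max (‖x i - x q‖ - lhat i q) 0 ^ 2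

noncomputable def projBall {d : ℕ} (a : EuclideanSpace ℝ (Fin d)) (r : ℝ)
    (z : EuclideanSpace ℝ (Fin d)) : EuclideanSpace ℝ (Fin d) :=
  if ‖z - a‖ ≤ r then z else a + (r / ‖z - a‖) • (z - a)

/-- The Coop. PPM algorithm: `X (k+1)` is obtained from `X k` by updating the
blocks successively for `i = 1, …, n`. -/
def IsPPM {d n : ℕ} {J : Type*} (a : J → EuclideanSpace ℝ (Fin d))
    (A : Fin n → Finset J) (dhat : Fin n → J → ℝ)
    (B : Fin n → Finset (Fin n)) (lhat : Fin n → Fin n → ℝ)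
    (X : ℕ → Fin n → EuclideanSpace ℝ (Fin d)) : Prop :=
  ∀ (k : ℕ) (i : Fin n),
    X (k + 1) i = (1 / 2 : ℝ) • X k i
      + (1 / (2 * (((A i).card : ℝ) + ((B i).card : ℝ)))) •
        ((∑ j ∈ A i, projBall (a j) (dhat i j) (X k i))
          + ∑ q ∈ B i, projBall (if q < i then X (k + 1) q else X k q) (lhat i q) (X k i))


section AuxPPM
open RealInnerProductSpace

variable {d : ℕ}
local notation "E" => EuclideanSpace ℝ (Fin d)

lemma projBall_mem {a z : E} {r : ℝ} (hr : 0 ≤ r) : ‖projBall a r z - a‖ ≤ r := by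
  unfold projBall
  split_ifs with h
  · exact h
  · push_neg at h
    have ht : 0 < ‖z - a‖ := hr.trans_lt h
    rw [add_sub_cancel_left, norm_smul, Real.norm_eq_abs, abs_of_nonneg (by positivity)]
    rw [div_mul_cancel₀ _ ht.ne']

lemma projBall_dist {a z : E} {r : ℝ} (hr : 0 ≤ r) :
    ‖z - projBall a r z‖ = max (‖z - a‖ - r) 0 := by
  unfold projBall
  split_ifs with h
  · simp [max_eq_right (sub_nonpos.mpr h)]
  · push_neg at h
    have ht : 0 < ‖z - a‖ := hr.trans_lt h
    have h1 : z - (a + (r / ‖z - a‖) • (z - a)) = (1 - r / ‖z - a‖) • (z - a) := by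
      rw [sub_smul, one_smul, sub_add_eq_sub_sub]
    rw [h1, norm_smul, Real.norm_eq_abs,
      abs_of_nonneg (by rw [sub_nonneg]; exact (div_le_one ht).mpr h.le),
      max_eq_left (by linarith)]
    field_simp


lemma perBall {a x y : E} {r : ℝ} (hr : 0 ≤ r) :
    max (‖y - a‖ - r) 0 ^ 2 ≤ max (‖x - a‖ - r) 0 ^ 2
      + 2 * ⟪y - x, x - projBall a r x⟫ + ‖y - x‖ ^ 2 := by
  set P := projBall a r x with hP
  have h1 : max (‖y - a‖ - r) 0 ≤ ‖y - P‖ := by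
    apply max_le _ (norm_nonneg _)
    have h2 : ‖y - a‖ ≤ ‖y - P‖ + ‖P - a‖ := by
      calc ‖y - a‖ = ‖(y - P) + (P - a)‖ := by abel_nf
        _ ≤ _ := norm_add_le _ _
    have := projBall_mem (a := a) (z := x) hr
    linarith
  have h2 : max (‖y - a‖ - r) 0 ^ 2 ≤ ‖y - P‖ ^ 2 :=
    pow_le_pow_left₀ (le_max_right _ _) h1 2
  have h3 : ‖y - P‖ ^ 2 = ‖y - x‖ ^ 2 + 2 * ⟪y - x, x - P⟫ + ‖x - P‖ ^ 2 := by
    have he : y - P = (y - x) + (x - P) := by abel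
    rw [he, norm_add_sq_real]
  rw [projBall_dist hr] at h3
  linarith

lemma sumBall_step {ι : Type*} (s : Finset ι) (hs : s.Nonempty)
    (c : ι → E) (r : ι → ℝ) (hr : ∀ t ∈ s, 0 ≤ r t) (x y : E)
    (hy : y = (1/2 : ℝ) • x + (1/(2 * (s.card : ℝ))) • ∑ t ∈ s, projBall (c t) (r t) x) :
    ∑ t ∈ s, max (‖y - c t‖ - r t) 0 ^ 2 ≤ ∑ t ∈ s, max (‖x - c t‖ - r t) 0 ^ 2 := by
  set m : ℝ := (s.card : ℝ) with hm
  have hm0 : 0 < m := by rw [hm]; exact_mod_cast Finset.card_pos.mpr hs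
  set g : E := ∑ t ∈ s, (x - projBall (c t) (r t) x) with hg
  have hgval : g = m • x - ∑ t ∈ s, projBall (c t) (r t) x := by
    rw [hg, Finset.sum_sub_distrib, Finset.sum_const, hm, Nat.cast_smul_eq_nsmul]
  have hyx : y - x = (-(1/(2*m))) • g := by
    rw [hy, hgval]
    match_scalars <;> (field_simp; try ring)
  have hsum : ∑ t ∈ s, max (‖y - c t‖ - r t) 0 ^ 2
      ≤ ∑ t ∈ s, max (‖x - c t‖ - r t) 0 ^ 2 + 2 * ⟪y - x, g⟫ + m * ‖y - x‖ ^ 2 := by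
    have h := Finset.sum_le_sum (fun t ht => perBall (a := c t) (x := x) (y := y) (hr t ht))
    rwa [Finset.sum_add_distrib, Finset.sum_add_distrib, ← Finset.mul_sum, ← inner_sum,
      ← hg, Finset.sum_const, nsmul_eq_mul, ← hm] at h
  have hI : ⟪y - x, g⟫ = -(1/(2*m)) * ‖g‖ ^ 2 := by
    rw [hyx, real_inner_smul_left, real_inner_self_eq_norm_sq]
  have hN : ‖y - x‖ ^ 2 = (1/(2*m))^2 * ‖g‖ ^ 2 := by
    rw [hyx, norm_smul, mul_pow, Real.norm_eq_abs, abs_neg, sq_abs]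
  have hG : (0:ℝ) ≤ ‖g‖ ^ 2 := sq_nonneg _
  have key : 2 * ⟪y - x, g⟫ + m * ‖y - x‖ ^ 2 ≤ 0 := by
    rw [hI, hN]
    have he : 2 * (-(1/(2*m)) * ‖g‖^2) + m * ((1/(2*m))^2 * ‖g‖^2) = -(3 * ‖g‖^2)/(4*m) := by
      field_simp; ring
    rw [he]
    apply div_nonpos_of_nonpos_of_nonneg <;> nlinarith
  linarith


lemma obj_update {d n : ℕ} {J : Type*} (a : J → EuclideanSpace ℝ (Fin d))
    (A : Fin n → Finset J) (dhat : Fin n → J → ℝ)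
    (B : Fin n → Finset (Fin n)) (lhat : Fin n → Fin n → ℝ)
    (hBirr : ∀ i : Fin n, i ∉ B i)
    (hBsymm : ∀ i q : Fin n, q ∈ B i ↔ i ∈ B q)
    (hlsymm : ∀ i q : Fin n, lhat i q = lhat q i)
    (x : Fin n → EuclideanSpace ℝ (Fin d)) (i : Fin n) (z : EuclideanSpace ℝ (Fin d)) :
    obj a A dhat B lhat (Function.update x i z)
      = ((∑ j ∈ A i, max (‖z - a j‖ - dhat i j) 0 ^ 2)
          + ∑ q ∈ B i, max (‖z - x q‖ - lhat i q) 0 ^ 2)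
        + ((∑ p ∈ univ.erase i, ∑ j ∈ A p, max (‖x p - a j‖ - dhat p j) 0 ^ 2)
          + (1/2) * ((∑ p ∈ univ.erase i, ∑ q ∈ B p, max (‖x p - x q‖ - lhat p q) 0 ^ 2)
            - ∑ q ∈ B i, max (‖x i - x q‖ - lhat i q) 0 ^ 2)) := by
  have hne : ∀ q ∈ B i, q ≠ i := fun q hq he => hBirr i (he ▸ hq)
  have hui : Function.update x i z i = z := Function.update_self i z x
  have hup : ∀ p : Fin n, p ≠ i → Function.update x i z p = x p :=
    fun p hp => Function.update_of_ne hp z x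
  unfold obj
  -- A part
  have hA : (∑ p, ∑ j ∈ A p, max (‖Function.update x i z p - a j‖ - dhat p j) 0 ^ 2)
      = (∑ j ∈ A i, max (‖z - a j‖ - dhat i j) 0 ^ 2)
        + ∑ p ∈ univ.erase i, ∑ j ∈ A p, max (‖x p - a j‖ - dhat p j) 0 ^ 2 := by
    rw [← Finset.add_sum_erase _ _ (mem_univ i), hui]
    congr 1
    exact Finset.sum_congr rfl fun p hp => by rw [hup p (Finset.ne_of_mem_erase hp)]
  -- B part
  have hB : (∑ p, ∑ q ∈ B p, max (‖Function.update x i z p - Function.update x i z q‖ - lhat p q) 0 ^ 2)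
      = 2 * (∑ q ∈ B i, max (‖z - x q‖ - lhat i q) 0 ^ 2)
        + ((∑ p ∈ univ.erase i, ∑ q ∈ B p, max (‖x p - x q‖ - lhat p q) 0 ^ 2)
          - ∑ q ∈ B i, max (‖x i - x q‖ - lhat i q) 0 ^ 2) := by
    rw [← Finset.add_sum_erase _ _ (mem_univ i)]
    have h1 : (∑ q ∈ B i, max (‖Function.update x i z i - Function.update x i z q‖ - lhat i q) 0 ^ 2)
        = ∑ q ∈ B i, max (‖z - x q‖ - lhat i q) 0 ^ 2 :=
      Finset.sum_congr rfl fun q hq => by rw [hui, hup q (hne q hq)]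
    have h2 : ∀ p ∈ univ.erase i,
        (∑ q ∈ B p, max (‖Function.update x i z p - Function.update x i z q‖ - lhat p q) 0 ^ 2)
        = (∑ q ∈ B p, max (‖x p - x q‖ - lhat p q) 0 ^ 2)
          + ∑ q ∈ B p, (if q = i then
              (max (‖z - x p‖ - lhat i p) 0 ^ 2 - max (‖x i - x p‖ - lhat i p) 0 ^ 2) else 0) := by
      intro p hp
      have hpi := Finset.ne_of_mem_erase hp
      rw [← Finset.sum_add_distrib]
      refine Finset.sum_congr rfl fun q hq => ?_
      rw [hup p hpi]
      by_cases hqi : q = i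
      · subst hqi
        rw [hui, if_pos rfl, norm_sub_rev, hlsymm p q, norm_sub_rev (x q) (x p)]
        ring
      · rw [hup q hqi, if_neg hqi, add_zero]
    rw [Finset.sum_congr rfl h2, Finset.sum_add_distrib]
    have h3 : (∑ p ∈ univ.erase i, ∑ q ∈ B p, (if q = i then
          (max (‖z - x p‖ - lhat i p) 0 ^ 2 - max (‖x i - x p‖ - lhat i p) 0 ^ 2) else 0))
        = (∑ q ∈ B i, max (‖z - x q‖ - lhat i q) 0 ^ 2)
          - ∑ q ∈ B i, max (‖x i - x q‖ - lhat i q) 0 ^ 2 := by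
      have h4 : ∀ p ∈ univ.erase i, (∑ q ∈ B p, (if q = i then
            (max (‖z - x p‖ - lhat i p) 0 ^ 2 - max (‖x i - x p‖ - lhat i p) 0 ^ 2) else 0))
          = (if p ∈ B i then
            (max (‖z - x p‖ - lhat i p) 0 ^ 2 - max (‖x i - x p‖ - lhat i p) 0 ^ 2) else 0) := by
        intro p hp
        rw [Finset.sum_ite_eq' (B p) i]
        exact if_congr (hBsymm i p).symm rfl rfl
      rw [Finset.sum_congr rfl h4, Finset.sum_ite_mem,
        Finset.inter_eq_right.mpr (fun q hq => Finset.mem_erase.mpr ⟨hne q hq, mem_univ q⟩),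
        Finset.sum_sub_distrib]
    rw [h1, h3]
    ring
  rw [hA, hB]
  ring


lemma obj_step {d n : ℕ} {J : Type*} (a : J → EuclideanSpace ℝ (Fin d))
    (A : Fin n → Finset J) (dhat : Fin n → J → ℝ)
    (B : Fin n → Finset (Fin n)) (lhat : Fin n → Fin n → ℝ)
    (hdhat : ∀ i, ∀ j ∈ A i, 0 ≤ dhat i j)
    (hlhat : ∀ i, ∀ q ∈ B i, 0 ≤ lhat i q)
    (hBirr : ∀ i : Fin n, i ∉ B i)
    (hBsymm : ∀ i q : Fin n, q ∈ B i ↔ i ∈ B q)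
    (hlsymm : ∀ i q : Fin n, lhat i q = lhat q i)
    (hcard : ∀ i : Fin n, 1 ≤ (A i).card + (B i).card)
    (X : ℕ → Fin n → EuclideanSpace ℝ (Fin d))
    (hX : IsPPM a A dhat B lhat X) (k : ℕ) :
    obj a A dhat B lhat (X (k + 1)) ≤ obj a A dhat B lhat (X k) := by
  set Z : ℕ → Fin n → EuclideanSpace ℝ (Fin d) :=
    fun j p => if (p : ℕ) < j then X (k + 1) p else X k p with hZ
  have hZ0 : Z 0 = X k := by funext p; simp [hZ]
  have hZn : Z n = X (k + 1) := by funext p; simp [hZ, p.isLt]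
  have main : ∀ j ≤ n, obj a A dhat B lhat (Z j) ≤ obj a A dhat B lhat (X k) := by
    intro j hj
    induction j with
    | zero => rw [hZ0]
    | succ j ih =>
      have hjn : j < n := hj
      set i : Fin n := ⟨j, hjn⟩ with hi
      have hupd : Z (j + 1) = Function.update (Z j) i (X (k + 1) i) := by
        funext p
        by_cases hp : p = i
        · subst hp
          simp [hZ, hi, Function.update_self]
        · have hv : (p : ℕ) ≠ j := fun h => hp (Fin.ext h)
          have hiff : ((p : ℕ) < j + 1) ↔ ((p : ℕ) < j) := by omega
          rw [Function.update_of_ne hp]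
          simp only [hZ, hiff]
      have hxji : Z j i = X k i := by simp [hZ, hi]
      -- the combined ball family
      set s : Finset (J ⊕ Fin n) := (A i).disjSum (B i) with hs
      have hsne : s.Nonempty := by
        rw [← Finset.card_pos, hs, Finset.card_disjSum]
        exact hcard i
      set c : J ⊕ Fin n → EuclideanSpace ℝ (Fin d) := Sum.elim a (fun q => Z j q) with hc
      set r : J ⊕ Fin n → ℝ := Sum.elim (dhat i) (lhat i) with hr
      have hrnn : ∀ t ∈ s, 0 ≤ r t := by
        rintro (u | u) ht
        · exact hdhat i u (Finset.inl_mem_disjSum.mp ht)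
        · exact hlhat i u (Finset.inr_mem_disjSum.mp ht)
      have hy : X (k + 1) i = (1/2 : ℝ) • (Z j i)
          + (1/(2 * (s.card : ℝ))) • ∑ t ∈ s, projBall (c t) (r t) (Z j i) := by
        have hppm := hX k i
        have hsum' : (∑ q ∈ B i, projBall (if q < i then X (k + 1) q else X k q)
              (lhat i q) (X k i)) = ∑ q ∈ B i, projBall (Z j q) (lhat i q) (X k i) := by
          refine Finset.sum_congr rfl fun q hq => ?_
          have hiff : (q < i) ↔ ((q : ℕ) < j) := by rw [Fin.lt_def]
          simp only [hZ]
          by_cases hql : (q : ℕ) < j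
          · rw [if_pos (hiff.mpr hql), if_pos hql]
          · rw [if_neg (fun h => hql (hiff.mp h)), if_neg hql]
        rw [hxji, hs, Finset.sum_disjSum, Finset.card_disjSum]
        simp only [hc, hr, Sum.elim_inl, Sum.elim_inr]
        rw [hppm, hsum', Nat.cast_add]
      have hstep := sumBall_step s hsne c r hrnn (Z j i) (X (k + 1) i) hy
      rw [hs, Finset.sum_disjSum, Finset.sum_disjSum] at hstep
      simp only [hc, hr, Sum.elim_inl, Sum.elim_inr] at hstep
      have e1 := obj_update a A dhat B lhat hBirr hBsymm hlsymm (Z j) i (X (k + 1) i)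
      have e2 := obj_update a A dhat B lhat hBirr hBsymm hlsymm (Z j) i (Z j i)
      rw [Function.update_eq_self] at e2
      have h5 : obj a A dhat B lhat (Z (j + 1)) ≤ obj a A dhat B lhat (Z j) := by
        rw [hupd, e1, e2]
        simp only [hxji] at hstep ⊢
        linarith
      exact h5.trans (ih (Nat.le_of_succ_le hj))
  have := main n le_rfl
  rwa [hZn] at this


set_option linter.unusedSectionVars false in
theorem final {n : ℕ} {J : Type*} [Fintype J]
    (a : J → EuclideanSpace ℝ (Fin d)) (A : Fin n → Finset J) (dhat : Fin n → J → ℝ)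
    (B : Fin n → Finset (Fin n)) (lhat : Fin n → Fin n → ℝ)
    (X : ℕ → Fin n → EuclideanSpace ℝ (Fin d)) (hn : 1 ≤ n)
    (hmono : ∀ k, obj a A dhat B lhat (X (k+1)) ≤ obj a A dhat B lhat (X k))
    (hconn : ∀ i : Fin n, ∃ (r : ℕ) (c : ℕ → Fin n), c 0 = i ∧
      (∀ t, t < r → c (t + 1) ∈ B (c t)) ∧ (A (c r)).Nonempty) :
    Bornology.IsBounded (Set.range X) := by
  set F := obj a A dhat B lhat (X 0) with hF
  have hobj : ∀ k, obj a A dhat B lhat (X k) ≤ F := by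
    intro k; induction k with
    | zero => exact le_rfl
    | succ k ih => exact (hmono k).trans ih
  have hS2 : ∀ k, (0:ℝ) ≤ ∑ i, ∑ q ∈ B i, max (‖X k i - X k q‖ - lhat i q) 0 ^ 2 :=
    fun k => Finset.sum_nonneg fun i _ => Finset.sum_nonneg fun q _ => sq_nonneg _
  have hS1 : ∀ k, (0:ℝ) ≤ ∑ i, ∑ j ∈ A i, max (‖X k i - a j‖ - dhat i j) 0 ^ 2 :=
    fun k => Finset.sum_nonneg fun i _ => Finset.sum_nonneg fun j _ => sq_nonneg _
  have htermA : ∀ (k : ℕ) (i : Fin n), ∀ j ∈ A i,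
      max (‖X k i - a j‖ - dhat i j) 0 ^ 2 ≤ F := by
    intro k i j hj
    have h1 : max (‖X k i - a j‖ - dhat i j) 0 ^ 2
        ≤ ∑ j' ∈ A i, max (‖X k i - a j'‖ - dhat i j') 0 ^ 2 :=
      Finset.single_le_sum (f := fun j' => max (‖X k i - a j'‖ - dhat i j') 0 ^ 2)
        (fun j' _ => sq_nonneg _) hj
    have h2 : (∑ j' ∈ A i, max (‖X k i - a j'‖ - dhat i j') 0 ^ 2)
        ≤ ∑ i', ∑ j' ∈ A i', max (‖X k i' - a j'‖ - dhat i' j') 0 ^ 2 :=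
      Finset.single_le_sum (f := fun i' => ∑ j' ∈ A i', max (‖X k i' - a j'‖ - dhat i' j') 0 ^ 2)
        (fun i' _ => Finset.sum_nonneg fun j' _ => sq_nonneg _) (mem_univ i)
    have h3 := hobj k
    rw [hF] at h3 ⊢
    unfold obj at h3 ⊢
    have := hS2 k
    linarith
  have htermB : ∀ (k : ℕ) (i : Fin n), ∀ q ∈ B i,
      max (‖X k i - X k q‖ - lhat i q) 0 ^ 2 ≤ 2 * F := by
    intro k i q hq
    have h1 : max (‖X k i - X k q‖ - lhat i q) 0 ^ 2
        ≤ ∑ q' ∈ B i, max (‖X k i - X k q'‖ - lhat i q') 0 ^ 2 :=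
      Finset.single_le_sum (f := fun q' => max (‖X k i - X k q'‖ - lhat i q') 0 ^ 2)
        (fun q' _ => sq_nonneg _) hq
    have h2 : (∑ q' ∈ B i, max (‖X k i - X k q'‖ - lhat i q') 0 ^ 2)
        ≤ ∑ i', ∑ q' ∈ B i', max (‖X k i' - X k q'‖ - lhat i' q') 0 ^ 2 :=
      Finset.single_le_sum (f := fun i' => ∑ q' ∈ B i', max (‖X k i' - X k q'‖ - lhat i' q') 0 ^ 2)
        (fun i' _ => Finset.sum_nonneg fun q' _ => sq_nonneg _) (mem_univ i)
    have h3 := hobj k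
    rw [hF] at h3 ⊢
    unfold obj at h3 ⊢
    have := hS1 k
    linarith
  have hnormA : ∀ (k : ℕ) (i : Fin n), ∀ j ∈ A i,
      ‖X k i - a j‖ ≤ dhat i j + Real.sqrt F := by
    intro k i j hj
    have h0 : (0:ℝ) ≤ max (‖X k i - a j‖ - dhat i j) 0 := le_max_right _ _
    have h1 := Real.sqrt_le_sqrt (htermA k i j hj)
    rw [Real.sqrt_sq h0] at h1
    have h2 : ‖X k i - a j‖ - dhat i j ≤ max (‖X k i - a j‖ - dhat i j) 0 := le_max_left _ _
    linarith
  have hnormB : ∀ (k : ℕ) (i : Fin n), ∀ q ∈ B i,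
      ‖X k i - X k q‖ ≤ lhat i q + Real.sqrt (2 * F) := by
    intro k i q hq
    have h0 : (0:ℝ) ≤ max (‖X k i - X k q‖ - lhat i q) 0 := le_max_right _ _
    have h1 := Real.sqrt_le_sqrt (htermB k i q hq)
    rw [Real.sqrt_sq h0] at h1
    have h2 : ‖X k i - X k q‖ - lhat i q ≤ max (‖X k i - X k q‖ - lhat i q) 0 := le_max_left _ _
    linarith
  -- per-coordinate bound via connectivity
  have hcoord : ∀ i : Fin n, ∃ C : ℝ, ∀ k, ‖X k i‖ ≤ C := by
    intro i
    obtain ⟨r, c, hc0, hchain, hAr⟩ := hconn i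
    have key : ∀ m t, r = t + m → ∃ C : ℝ, ∀ k, ‖X k (c t)‖ ≤ C := by
      intro m
      induction m with
      | zero =>
        intro t ht
        obtain ⟨j, hj⟩ := hAr
        refine ⟨dhat (c r) j + Real.sqrt F + ‖a j‖, fun k => ?_⟩
        have h1 : ‖X k (c t)‖ ≤ ‖X k (c t) - a j‖ + ‖a j‖ := by
          calc ‖X k (c t)‖ = ‖(X k (c t) - a j) + a j‖ := by rw [sub_add_cancel]
            _ ≤ _ := norm_add_le _ _
        have ht' : t = r := by omega
        subst ht'
        have := hnormA k (c t) j hj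
        linarith
      | succ m ih =>
        intro t ht
        obtain ⟨C, hC⟩ := ih (t + 1) (by omega)
        have hmem : c (t + 1) ∈ B (c t) := hchain t (by omega)
        refine ⟨lhat (c t) (c (t + 1)) + Real.sqrt (2 * F) + C, fun k => ?_⟩
        have h1 : ‖X k (c t)‖ ≤ ‖X k (c t) - X k (c (t + 1))‖ + ‖X k (c (t + 1))‖ := by
          calc ‖X k (c t)‖ = ‖(X k (c t) - X k (c (t + 1))) + X k (c (t + 1))‖ := by rw [sub_add_cancel]
            _ ≤ _ := norm_add_le _ _
        have := hnormB k (c t) (c (t+1)) hmem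
        have := hC k
        linarith
    obtain ⟨C, hC⟩ := key r 0 (zero_add r).symm
    exact ⟨C, fun k => by rw [← hc0]; exact hC k⟩
  choose C hC using hcoord
  have hFn : (univ : Finset (Fin n)).Nonempty := ⟨⟨0, hn⟩, mem_univ _⟩
  set M : ℝ := max (univ.sup' hFn C) 0 with hM
  have hbound : ∀ k, ‖X k‖ ≤ M := by
    intro k
    refine (pi_norm_le_iff_of_nonneg (le_max_right _ _)).mpr fun i => ?_
    exact (hC i k).trans ((Finset.le_sup' C (mem_univ i)).trans (le_max_left _ _))
  refine Bornology.IsBounded.subset (Metric.isBounded_closedBall (x := (0 : Fin n → EuclideanSpace ℝ (Fin d))) (r := M)) ?_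
  rintro _ ⟨k, rfl⟩
  simpa [dist_zero_right] using hbound k

end AuxPPM

theorem stmt9 (d n : ℕ) (hd : 1 ≤ d) (hn : 1 ≤ n) {J : Type*} [Fintype J]
    (a : J → EuclideanSpace ℝ (Fin d))
    (A : Fin n → Finset J) (dhat : Fin n → J → ℝ)
    (B : Fin n → Finset (Fin n)) (lhat : Fin n → Fin n → ℝ)
    (hdhat : ∀ i, ∀ j ∈ A i, 0 ≤ dhat i j)
    (hlhat : ∀ i, ∀ q ∈ B i, 0 ≤ lhat i q)
    (hBirr : ∀ i : Fin n, i ∉ B i)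
    (hBsymm : ∀ i q : Fin n, q ∈ B i ↔ i ∈ B q)
    (hlsymm : ∀ i q : Fin n, lhat i q = lhat q i)
    (hcard : ∀ i : Fin n, 1 ≤ (A i).card + (B i).card)
    (X : ℕ → Fin n → EuclideanSpace ℝ (Fin d))
    (hX : IsPPM a A dhat B lhat X)
    (hconn : ∀ i : Fin n, ∃ (r : ℕ) (c : ℕ → Fin n), c 0 = i ∧
      (∀ t, t < r → c (t + 1) ∈ B (c t)) ∧ (A (c r)).Nonempty) :
    Bornology.IsBounded (Set.range X) := by
  exact final a A dhat B lhat X hn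
    (obj_step a A dhat B lhat hdhat hlhat hBirr hBsymm hlsymm hcard X hX) hconn
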